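/- For any graph G and any Roman graph H (i.e., γ_R(H) = 2γ(H)), γ_R(G □ H) ≥ (4/3)·γ(G)·γ(H) and γ(G □ H) ≥ (2/3)·γ(G)·γ(H). -/

import Mathlib

open Finset

/-- A set `S` is a dominating set of `G` if every vertex outside `S` has a neighbor in `S`. -/
def IsDominatingSet {V : Type*} (G : SimpleGraph V) (S : Set V) : Prop :=
  ∀ v, v ∉ S → ∃ u ∈ S, G.Adj u v

/-- The domination number `γ(G)`. -/
noncomputable def domNum {V : Type*} [Fintype V] (G : SimpleGraph V) : ℕ :=
  sInf {n | ∃ S : Finset V, IsDominatingSet G ↑S ∧ S.card = n}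

/-- A Roman dominating function: values in {0,1,2}, every vertex of value 0 has a
neighbor of value 2. -/
def IsRDF {V : Type*} (G : SimpleGraph V) (f : V → ℕ) : Prop :=
  (∀ v, f v ≤ 2) ∧ ∀ v, f v = 0 → ∃ u, G.Adj u v ∧ f u = 2

/-- The Roman domination number `γ_R(G)`. -/
noncomputable def romanDomNum {V : Type*} [Fintype V] (G : SimpleGraph V) : ℕ :=
  sInf {n | ∃ f : V → ℕ, IsRDF G f ∧ ∑ v, f v = n}

/-- The strong product of graphs. -/
def strongProd {V W : Type*} (G : SimpleGraph V) (H : SimpleGraph W) :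
    SimpleGraph (V × W) where
  Adj x y := x ≠ y ∧ (x.1 = y.1 ∨ G.Adj x.1 y.1) ∧ (x.2 = y.2 ∨ H.Adj x.2 y.2)
  symm := ⟨fun x y => by
    rintro ⟨h, h1, h2⟩
    refine ⟨h.symm, ?_, ?_⟩
    · cases h1 with
      | inl h => exact Or.inl h.symm
      | inr h => exact Or.inr h.symm
    · cases h2 with
      | inl h => exact Or.inl h.symm
      | inr h => exact Or.inr h.symm⟩
  loopless := ⟨fun x => by simp⟩

/-- `G` has an efficient dominating set: a dominating set whose elements have
pairwise disjoint closed neighborhoods. -/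
def HasEfficientDomSet {V : Type*} (G : SimpleGraph V) : Prop :=
  ∃ S : Finset V, IsDominatingSet G ↑S ∧
    ∀ u ∈ S, ∀ v ∈ S, u ≠ v →
      Disjoint (insert u (G.neighborSet u)) (insert v (G.neighborSet v))

lemma domNum_le_card {V : Type*} [Fintype V] (G : SimpleGraph V) (S : Finset V)
    (hS : IsDominatingSet G ↑S) : domNum G ≤ S.card :=
  Nat.sInf_le ⟨S, hS, rfl⟩

lemma romanDomNum_le_sum {V : Type*} [Fintype V] (G : SimpleGraph V) (f : V → ℕ)
    (hf : IsRDF G f) : romanDomNum G ≤ ∑ v, f v :=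
  Nat.sInf_le ⟨f, hf, rfl⟩

lemma exists_min_rdf {V : Type*} [Fintype V] (G : SimpleGraph V) :
    ∃ f : V → ℕ, IsRDF G f ∧ ∑ v, f v = romanDomNum G :=
  Nat.sInf_mem (⟨∑ v : V, 2, fun _ => 2, ⟨fun _ => le_rfl, fun v h => by simp at h⟩, rfl⟩ :
    Set.Nonempty {n | ∃ f : V → ℕ, IsRDF G f ∧ ∑ v, f v = n})

lemma exists_min_domset {V : Type*} [Fintype V] (G : SimpleGraph V) :
    ∃ S : Finset V, IsDominatingSet G ↑S ∧ S.card = domNum G :=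
  Nat.sInf_mem (⟨Finset.univ.card, Finset.univ, fun v hv => absurd (by simp) hv, rfl⟩ :
    Set.Nonempty {n | ∃ S : Finset V, IsDominatingSet G ↑S ∧ S.card = n})

lemma romanDomNum_le_two_mul_domNum {V : Type*} [Fintype V] (G : SimpleGraph V) :
    romanDomNum G ≤ 2 * domNum G := by
  classical
  obtain ⟨S, hS, hcard⟩ := exists_min_domset G
  have hrdf : IsRDF G (fun v => if v ∈ S then 2 else 0) := by
    constructor
    · intro v; dsimp only; split <;> omega
    · intro v hv
      have hvS : v ∉ S := by by_contra h; simp [h] at hv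
      obtain ⟨u, hu, hadj⟩ := hS v (by simpa using hvS)
      exact ⟨u, hadj, by simp [Finset.mem_coe.mp hu]⟩
  calc romanDomNum G ≤ ∑ v, if v ∈ S then 2 else 0 := romanDomNum_le_sum G _ hrdf
    _ = 2 * S.card := by
        rw [Finset.sum_ite_mem, Finset.univ_inter, Finset.sum_const, smul_eq_mul, mul_comm]
    _ = 2 * domNum G := by rw [hcard]

lemma key_ineq {V W : Type*} [Fintype V] [Fintype W]
    (G : SimpleGraph V) (H : SimpleGraph W)
    (hRoman : romanDomNum H = 2 * domNum H) :
    4 * (domNum G * domNum H) ≤ 3 * romanDomNum (G.boxProd H) := by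
  classical
  obtain ⟨f, hf, hw⟩ := exists_min_rdf (G.boxProd H)
  obtain ⟨S, hS, hScard⟩ := exists_min_domset G
  -- choose a dominator p v ∈ S for each vertex of G
  have hp : ∀ v : V, ∃ s, s ∈ S ∧ (s = v ∨ G.Adj s v) := by
    intro v
    by_cases hv : v ∈ S
    · exact ⟨v, hv, Or.inl rfl⟩
    · obtain ⟨u, hu, hadj⟩ := hS v (by simpa using hv)
      exact ⟨u, by simpa using hu, Or.inr hadj⟩
  choose p hpS hpd using hp
  -- cell predicates
  set two : V → W → Prop := fun s h => ∃ g, p g = s ∧ f (g, h) = 2 with htwo_def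
  set one : V → W → Prop := fun s h => ∃ g, p g = s ∧ f (g, h) = 1 with hone_def
  set hor : V → W → Prop := fun s h =>
    (∀ g, p g = s → f (g, h) = 0) ∧ ∀ h', H.Adj h' h → ¬ two s h' with hhor_def
  set fi : V → W → ℕ := fun s h =>
    if two s h then 2 else if one s h ∨ hor s h then 1 else 0 with hfi_def
  -- each tube gives an RDF of H
  have hfiRDF : ∀ s : V, IsRDF H (fi s) := by
    intro s
    constructor
    · intro h; simp only [hfi_def]; split
      · exact le_rfl
      · split <;> omega
    · intro h h0
      simp only [hfi_def] at h0
      by_cases ht : two s h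
      · simp [ht] at h0
      · rw [if_neg ht] at h0
        by_cases ho : one s h ∨ hor s h
        · simp [ho] at h0
        · push_neg at ho
          obtain ⟨ho1, ho2⟩ := ho
          have hz : ∀ g, p g = s → f (g, h) = 0 := by
            intro g hg
            have h2 := hf.1 (g, h)
            have : f (g, h) ≠ 2 := fun hc => ht ⟨g, hg, hc⟩
            have : f (g, h) ≠ 1 := fun hc => ho1 ⟨g, hg, hc⟩
            omega
          have : ¬ (∀ h', H.Adj h' h → ¬ two s h') := by
            intro hb; exact ho2 ⟨hz, hb⟩
          push_neg at this
          obtain ⟨h', hadj, htw⟩ := this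
          exact ⟨h', hadj, by simp [hfi_def, htw]⟩
  -- tube weight bound: fi s h ≤ cell sum + hor indicator
  have hcell : ∀ (s : V) (h : W),
      fi s h ≤ (∑ g ∈ Finset.univ.filter (fun g => p g = s), f (g, h))
        + (if hor s h then 1 else 0) := by
    intro s h
    by_cases ht : two s h
    · obtain ⟨g0, hg, h2⟩ := ht
      have hle : f (g0, h) ≤ ∑ g ∈ Finset.univ.filter (fun g => p g = s), f (g, h) :=
        Finset.single_le_sum (f := fun g => f (g, h)) (fun i _ => Nat.zero_le _)
          (Finset.mem_filter.mpr ⟨Finset.mem_univ g0, hg⟩)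
      have : fi s h = 2 := by
        simp only [hfi_def]; rw [if_pos ⟨g0, hg, h2⟩]
      omega
    · by_cases ho : one s h
      · obtain ⟨g0, hg, h1⟩ := ho
        have hle : f (g0, h) ≤ ∑ g ∈ Finset.univ.filter (fun g => p g = s), f (g, h) :=
          Finset.single_le_sum (f := fun g => f (g, h)) (fun i _ => Nat.zero_le _)
            (Finset.mem_filter.mpr ⟨Finset.mem_univ g0, hg⟩)
        have : fi s h = 1 := by
          simp only [hfi_def, if_neg ht]
          rw [if_pos (Or.inl ⟨g0, hg, h1⟩)]
        omega
      · have : fi s h ≤ if hor s h then 1 else 0 := by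
          simp only [hfi_def, if_neg ht]
          by_cases hh : hor s h
          · rw [if_pos (Or.inr hh), if_pos hh]
          · rw [if_neg hh]
            rw [if_neg (by rintro (h1 | h2); exacts [ho h1, hh h2])]
        omega
  -- total weight and u
  set w : ℕ := ∑ x : V × W, f x with hw_def
  set u : ℕ := ∑ s ∈ S, ∑ h : W, (if hor s h then 1 else 0) with hu_def
  -- sum of cell sums over tubes equals w
  have hfiber : (∑ s ∈ S, ∑ h : W,
      ∑ g ∈ Finset.univ.filter (fun g => p g = s), f (g, h)) = w := by
    have h1 : ∀ s ∈ S, (∑ h : W, ∑ g ∈ Finset.univ.filter (fun g => p g = s), f (g, h))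
        = ∑ g ∈ Finset.univ.filter (fun g => p g = s), ∑ h : W, f (g, h) := by
      intro s _; exact Finset.sum_comm
    rw [Finset.sum_congr rfl h1]
    rw [Finset.sum_fiberwise_of_maps_to (fun g _ => hpS g) (fun g => ∑ h : W, f (g, h))]
    rw [hw_def, Fintype.sum_prod_type]
  -- main count: 2 γ(H) γ(G) ≤ w + u
  have hmain : 2 * domNum H * S.card ≤ w + u := by
    calc 2 * domNum H * S.card = ∑ _s ∈ S, 2 * domNum H := by
          rw [Finset.sum_const, smul_eq_mul, mul_comm]
      _ ≤ ∑ s ∈ S, ∑ h : W, fi s h := by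
          apply Finset.sum_le_sum
          intro s _
          rw [← hRoman]
          exact romanDomNum_le_sum H (fi s) (hfiRDF s)
      _ ≤ ∑ s ∈ S, ((∑ h : W, ∑ g ∈ Finset.univ.filter (fun g => p g = s), f (g, h))
            + ∑ h : W, (if hor s h then 1 else 0)) := by
          apply Finset.sum_le_sum
          intro s _
          rw [← Finset.sum_add_distrib]
          exact Finset.sum_le_sum (fun h _ => hcell s h)
      _ = w + u := by rw [Finset.sum_add_distrib, hfiber]
  -- count of 2's
  set b : ℕ := ∑ x : V × W, (if f x = 2 then 1 else 0) with hb_def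
  have hbw : 2 * b ≤ w := by
    rw [hb_def, hw_def, Finset.mul_sum]
    apply Finset.sum_le_sum
    intro x _
    have := hf.1 x
    split <;> omega
  -- row bound: u ≤ b
  have hub : u ≤ b := by
    have hswap : u = ∑ h : W, ∑ s ∈ S, (if hor s h then 1 else 0) := by
      rw [hu_def]; exact Finset.sum_comm
    have hb2 : b = ∑ h : W, (Finset.univ.filter (fun g : V => f (g, h) = 2)).card := by
      rw [hb_def, Fintype.sum_prod_type_right]
      congr 1
      ext h
      rw [Finset.card_filter]
    rw [hswap, hb2]
    apply Finset.sum_le_sum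
    intro h _
    -- per-row: number of hor tubes ≤ number of 2's in row h
    set Rh : Finset V := Finset.univ.filter (fun g : V => f (g, h) = 2) with hRh
    set Wh : Finset V := Rh ∪ S.filter (fun s => ¬ hor s h) with hWh
    have hWdom : IsDominatingSet G ↑Wh := by
      intro v hv
      have hvW : v ∉ Wh := by simpa using hv
      by_cases hh : hor (p v) h
      · have hv0 : f (v, h) = 0 := hh.1 v rfl
        obtain ⟨⟨x1, x2⟩, hxadj, hx2⟩ := hf.2 (v, h) hv0
        rw [SimpleGraph.boxProd_adj] at hxadj
        rcases hxadj with ⟨hadjG, hxh⟩ | ⟨hadjH, hxv⟩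
        · have hxh' : x2 = h := hxh
          subst hxh'
          have hadjG' : G.Adj x1 v := hadjG
          refine ⟨x1, ?_, hadjG'⟩
          have hmem : x1 ∈ Rh := Finset.mem_filter.mpr ⟨Finset.mem_univ _, hx2⟩
          simp only [hWh, Finset.mem_coe, Finset.mem_union]
          exact Or.inl hmem
        · exfalso
          have hxv' : x1 = v := hxv
          subst hxv'
          have hadjH' : H.Adj x2 h := hadjH
          exact hh.2 x2 hadjH' ⟨x1, rfl, hx2⟩
      · have hmem : p v ∈ Wh :=
          Finset.mem_union_right _ (Finset.mem_filter.mpr ⟨hpS v, hh⟩)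
        have hne : p v ≠ v := by
          intro he; apply hvW; rw [← he]; exact hmem
        rcases hpd v with he | hadj
        · exact absurd he hne
        · exact ⟨p v, by simpa using hmem, hadj⟩
    have h1 : S.card ≤ Wh.card := hScard ▸ domNum_le_card G Wh hWdom
    have h2 : Wh.card ≤ Rh.card + (S.filter (fun s => ¬ hor s h)).card := by
      rw [hWh]; exact Finset.card_union_le _ _
    have h3 : (S.filter (fun s => hor s h)).card
        + (S.filter (fun s => ¬ hor s h)).card = S.card :=
      Finset.card_filter_add_card_filter_not _
    have h4 : (∑ s ∈ S, if hor s h then 1 else 0) = (S.filter (fun s => hor s h)).card := by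
      rw [Finset.card_filter]
    omega
  -- combine
  have hfinal : 4 * (domNum G * domNum H) ≤ 3 * w := by
    rw [← hScard]
    nlinarith [hmain, hub, hbw]
  rw [hw] at hfinal
  exact hfinal

theorem stmt8 {V W : Type*} [Fintype V] [Fintype W]
    (G : SimpleGraph V) (H : SimpleGraph W)
    (hRoman : romanDomNum H = 2 * domNum H) :
    (romanDomNum (G.boxProd H) : ℝ) ≥ 4 / 3 * domNum G * domNum H ∧
    (domNum (G.boxProd H) : ℝ) ≥ 2 / 3 * domNum G * domNum H := by
  have hkey := key_ineq G H hRoman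
  have h2 := romanDomNum_le_two_mul_domNum (G.boxProd H)
  have hkeyR : (4 : ℝ) * (domNum G * domNum H) ≤ 3 * romanDomNum (G.boxProd H) := by
    exact_mod_cast hkey
  have h2R : (romanDomNum (G.boxProd H) : ℝ) ≤ 2 * domNum (G.boxProd H) := by
    exact_mod_cast h2
  constructor
  · rw [ge_iff_le]; nlinarith
  · rw [ge_iff_le]; nlinarith
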